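/- Let n and N be integers with 1 ≤ N ≤ n, and let λ be a real number such that λ − n/2 + k ≠ 0 for every integer k with 1 ≤ k ≤ N and λ − n + N ≠ 0. Then ∑_{j=0}^{N} (−N)_j (n/2)_j (λ)_j / ((λ − n/2 + 1)_j (n − N + 1)_j · j!) = [(λ − n + 1)_N · (n/2 − N + 1)_N / ((λ − n/2 + 1)_N · (n − N + 1)_N)] · (λ − n + 2N)/(λ − n + N). (This is the evaluation of the 2-balanced terminating ₃F₂(n/2, λ, −N; λ − n/2 + 1, n − N + 1; 1) obtained in the proof of Proposition 4.2 via Sheppard's transformation.) -/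
import Mathlib

noncomputable def poch (x : ℝ) : ℕ → ℝ
  | 0 => 1
  | k + 1 => poch x k * (x + k)

lemma poch_zero (x : ℝ) : poch x 0 = 1 := rfl

lemma poch_succ (x : ℝ) (k : ℕ) : poch x (k+1) = poch x k * (x + k) := rfl

lemma poch_succ_left (x : ℝ) (k : ℕ) : poch x (k+1) = x * poch (x+1) k := by
  induction k with
  | zero => simp [poch]
  | succ k ih => rw [poch, ih, poch]; push_cast; ring

lemma poch_add (x : ℝ) (m k : ℕ) : poch x (m+k) = poch x m * poch (x+m) k := by
  induction k with
  | zero => simp [poch]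
  | succ k ih =>
    rw [show m + (k+1) = (m+k)+1 from rfl, poch, ih, poch]
    push_cast; ring

lemma poch_ne_zero (x : ℝ) (k : ℕ) (h : ∀ i : ℕ, i < k → x + i ≠ 0) : poch x k ≠ 0 := by
  induction k with
  | zero => simp [poch]
  | succ k ih =>
    rw [poch]
    exact mul_ne_zero (ih fun i hi => h i (by omega)) (h k (by omega))

lemma poch_neg (s : ℝ) (j : ℕ) : poch (-s) j = (-1)^j * poch (s - j + 1) j := by
  induction j with
  | zero => simp [poch]
  | succ j ih =>
    rw [poch, ih, show s - ((j+1 : ℕ):ℝ) + 1 = (s - j) by push_cast; ring,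
      show (s - j : ℝ) = (s - j + 1) - 1 + 1 - 1 by ring]
    rw [show ((s - j + 1) - 1 + 1 - 1 : ℝ) = (s-j+1) - 1 by ring, poch_succ_left]
    push_cast; ring

lemma poch_one_add_nat (a k : ℕ) : poch ((a:ℝ)+1) k * (a.factorial : ℝ) = ((a+k).factorial : ℝ) := by
  induction k with
  | zero => simp [poch]
  | succ k ih =>
    rw [poch, show a + (k+1) = (a+k)+1 from rfl, Nat.factorial_succ]
    push_cast
    linear_combination ((a:ℝ) + k + 1) * ih

lemma poch_neg_nat (M j : ℕ) (h : j ≤ M) :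
    poch (-(M:ℝ)) j = (-1)^j * (M.choose j : ℝ) * (j.factorial : ℝ) := by
  have h2 : ((M:ℝ) - j + 1) = ((M-j : ℕ):ℝ) + 1 := by
    have : ((M - j : ℕ) : ℝ) = (M:ℝ) - j := by push_cast [h]; ring
    rw [this]
  rw [poch_neg, h2]
  have h1 := poch_one_add_nat (M-j) j
  rw [show M - j + j = M by omega] at h1
  have h4 := Nat.choose_mul_factorial_mul_factorial h
  have hfac : ((M-j).factorial : ℝ) ≠ 0 := by positivity
  have h5 : ((M.choose j : ℝ) * (j.factorial : ℝ)) * ((M-j).factorial : ℝ) = (M.factorial : ℝ) := by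
    exact_mod_cast congrArg (Nat.cast : ℕ → ℝ) h4
  have : poch (((M-j : ℕ):ℝ)+1) j = (M.choose j : ℝ) * (j.factorial : ℝ) :=
    mul_right_cancel₀ hfac (h1.trans h5.symm)
  rw [this]; ring

noncomputable def Fs (M : ℕ) (a b c : ℝ) (j : ℕ) : ℝ :=
  (M.choose j : ℝ) * poch a j * poch b j * poch (c + j) (M - j) * poch (c - a - b) (M - j)

noncomputable def Gs (M : ℕ) (a b c : ℝ) (j : ℕ) : ℝ :=
  (j:ℝ) * ((j:ℝ) + a + b - c - M) * Fs M a b c j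

lemma cert (M : ℕ) (a b c : ℝ) (hc : c - a - b ≠ 0) (j : ℕ) (hj : j < M + 2) :
    ((M:ℝ)+1) * (c-a-b) * (Fs (M+1) a b c j - (c-a)*(c-b) * Fs M a b (c+1) j)
      = Gs (M+1) a b c (j+1) - Gs (M+1) a b c j := by
  rcases Nat.lt_or_ge j (M+1) with hlt | hge
  · -- j ≤ M
    obtain ⟨k, rfl⟩ : ∃ k, M = j + k := ⟨M - j, by omega⟩
    unfold Gs Fs
    rw [show j + k + 1 - j = k + 1 by omega, show j + k - j = k by omega,
      show j + k + 1 - (j+1) = k by omega]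
    have hy : ((j+k+1).choose (j+1) * (j+1) : ℕ) = (j+k+1).choose j * (k+1) := by
      have h := Nat.choose_succ_right_eq (j+k+1) j
      rw [show j+k+1-j = k+1 by omega] at h
      exact h
    have hz : ((j+k+1) * ((j+k).choose j) : ℕ) = (j+k+1).choose (j+1) * (j+1) := by
      have h := Nat.add_one_mul_choose_eq (j+k) j
      exact h
    have hj1 : ((j:ℝ)+1) ≠ 0 := by positivity
    have hjk1 : ((j:ℝ)+(k:ℝ)+1) ≠ 0 := by positivity
    have hyR : (((j+k+1).choose (j+1) : ℕ) : ℝ) = ((j+k+1).choose j : ℝ) * ((k:ℝ)+1) / ((j:ℝ)+1) := by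
      have := congrArg (fun t : ℕ => (t:ℝ)) hy
      push_cast at this
      field_simp
      linarith [this]
    have hzR : (((j+k).choose j : ℕ) : ℝ) = ((j+k+1).choose j : ℝ) * ((k:ℝ)+1) / ((j:ℝ)+(k:ℝ)+1) := by
      have h1 := congrArg (fun t : ℕ => (t:ℝ)) hz
      have h2 := congrArg (fun t : ℕ => (t:ℝ)) hy
      push_cast at h1 h2
      field_simp
      nlinarith [h1, h2]
    have pU : poch (c + 1 - a - b) k = poch (c - a - b) k * (c - a - b + k) / (c - a - b) := by
      have h1 : poch (c-a-b) (k+1) = (c-a-b) * poch ((c-a-b)+1) k := poch_succ_left _ _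
      rw [poch_succ] at h1
      rw [show c + 1 - a - b = (c-a-b)+1 by ring]
      field_simp
      linarith [h1]
    have p1 : poch (c + (j:ℝ)) (k+1) = (c + (j:ℝ)) * poch (c + 1 + (j:ℝ)) k := by
      rw [poch_succ_left, show c + (j:ℝ) + 1 = c + 1 + (j:ℝ) by ring]
    have p1' : poch (c + ((j:ℕ)+1 : ℕ)) k = poch (c + 1 + (j:ℝ)) k := by
      rw [show (c + (((j:ℕ)+1 : ℕ) : ℝ)) = c + 1 + (j:ℝ) by push_cast; ring]
    rw [hyR, hzR, pU, p1, p1', poch_succ a j, poch_succ b j, poch_succ (c-a-b) k]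
    push_cast
    field_simp
    ring
  · have hje : j = M + 1 := by omega
    subst hje
    unfold Gs Fs
    rw [Nat.choose_self, Nat.sub_self, Nat.choose_eq_zero_of_lt (by omega : M < M + 1),
      Nat.choose_eq_zero_of_lt (by omega : M + 1 < M + 1 + 1)]
    simp [poch_zero]
    push_cast
    ring

lemma star (M : ℕ) (a b : ℝ) : ∀ c : ℝ,
    ∑ j ∈ Finset.range (M+1), Fs M a b c j = poch (c - a) M * poch (c - b) M := by
  induction M with
  | zero => intro c; simp [Fs, poch]
  | succ M ih =>
    intro c
    by_cases hc : c - a - b = 0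
    · have hca : c - a = b := by linarith
      have hcb : c - b = a := by linarith
      rw [Finset.sum_eq_single_of_mem (M+1) (by simp)]
      · unfold Fs
        rw [Nat.choose_self, Nat.sub_self, hca, hcb]
        simp [poch_zero]
        ring
      · intro j hj hne
        have hjlt : j < M + 1 := by
          have := Finset.mem_range.mp hj; omega
        unfold Fs
        rw [show M + 1 - j = (M - j) + 1 by omega, hc, poch_succ_left 0 (M - j)]
        ring
    · have tel := Finset.sum_range_sub (Gs (M+1) a b c) (M+2)
      have hG0 : Gs (M+1) a b c 0 = 0 := by simp [Gs]
      have hGe : Gs (M+1) a b c (M+2) = 0 := by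
        unfold Gs Fs
        rw [Nat.choose_eq_zero_of_lt (by omega : M+1 < M+2)]
        simp
      have hsum : ((M:ℝ)+1) * (c-a-b) *
          ∑ j ∈ Finset.range (M+2), (Fs (M+1) a b c j - (c-a)*(c-b) * Fs M a b (c+1) j) = 0 := by
        rw [Finset.mul_sum]
        rw [Finset.sum_congr rfl (fun j hj => cert M a b c hc j (Finset.mem_range.mp hj))]
        rw [tel, hG0, hGe]
        ring
      have hne : ((M:ℝ)+1) * (c-a-b) ≠ 0 := mul_ne_zero (by positivity) hc
      have hsum2 := (mul_eq_zero.mp hsum).resolve_left hne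
      rw [Finset.sum_sub_distrib, sub_eq_zero, ← Finset.mul_sum] at hsum2
      have hlast : Fs M a b (c+1) (M+1) = 0 := by
        unfold Fs
        rw [Nat.choose_eq_zero_of_lt (by omega : M < M+1)]
        simp
      rw [Finset.sum_range_succ (fun i => Fs M a b (c+1) i) (M+1), hlast, add_zero,
        ih (c+1)] at hsum2
      rw [show M+1+1 = M+2 from rfl, hsum2, poch_succ_left (c-a), poch_succ_left (c-b),
        show c - a + 1 = c + 1 - a by ring, show c - b + 1 = c + 1 - b by ring]
      ring

lemma saal (M : ℕ) (x y c e : ℝ) (he : e = x + y - c - M + 1)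
    (hc : ∀ i : ℕ, i < M → c + i ≠ 0)
    (hq : ∀ i : ℕ, i < M → c - x - y + i ≠ 0) :
    ∑ j ∈ Finset.range (M+1),
      poch x j * poch y j * poch (-(M:ℝ)) j / (poch c j * poch e j * (j.factorial : ℝ))
    = poch (c - x) M * poch (c - y) M / (poch c M * poch (c - x - y) M) := by
  have hcM : poch c M ≠ 0 := poch_ne_zero _ _ hc
  have hqM : poch (c-x-y) M ≠ 0 := poch_ne_zero _ _ hq
  rw [← star M x y c, Finset.sum_div]
  apply Finset.sum_congr rfl
  intro j hj
  have hjM : j ≤ M := by have := Finset.mem_range.mp hj; omega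
  have hcast : ((M-j:ℕ):ℝ) = (M:ℝ) - (j:ℝ) := by
    push_cast [hjM]; ring
  have hsq : ((-1:ℝ))^j * (-1)^j = 1 := by
    rw [← pow_add, ← two_mul, pow_mul]
    norm_num
  have hE : poch e j = (-1)^j * poch (c-x-y+((M-j:ℕ):ℝ)) j := by
    rw [show e = -(c - x - y + (M:ℝ) - 1) by rw [he]; ring, poch_neg,
      show c - x - y + (M:ℝ) - 1 - (j:ℝ) + 1 = c-x-y+((M-j:ℕ):ℝ) by rw [hcast]; ring]
  have hE' : poch (c-x-y+((M-j:ℕ):ℝ)) j = (-1)^j * poch e j := by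
    rw [hE, ← mul_assoc, hsq, one_mul]
  have hc_split : poch c M = poch c j * poch (c + j) (M - j) := by
    conv_lhs => rw [show M = j + (M-j) by omega, poch_add]
  have hq_split : poch (c-x-y) M = poch (c-x-y) (M-j) * ((-1)^j * poch e j) := by
    conv_lhs => rw [show M = (M-j) + j by omega, poch_add]
    rw [hE']
  have hneg := poch_neg_nat M j hjM
  have hcj : poch c j ≠ 0 := poch_ne_zero _ _ (fun i hi => hc i (by omega))
  have hcj2 : poch (c + (j:ℝ)) (M-j) ≠ 0 := by
    apply poch_ne_zero
    intro i hi
    rw [show c + (j:ℝ) + (i:ℝ) = c + ((j+i : ℕ):ℝ) by push_cast; ring]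
    exact hc _ (by omega)
  have hej : poch e j ≠ 0 := by
    intro h0
    apply hq_split ▸ hqM
    rw [h0]; ring
  have hfj : (j.factorial : ℝ) ≠ 0 := by positivity
  have hm1 : ((-1:ℝ))^j ≠ 0 := by
    intro h0
    have := hsq; rw [h0] at this; simp at this
  unfold Fs
  have hden1 : poch c j * poch e j * (j.factorial : ℝ) ≠ 0 :=
    mul_ne_zero (mul_ne_zero hcj hej) hfj
  have hden2 : poch c M * poch (c-x-y) M ≠ 0 := mul_ne_zero hcM hqM
  rw [div_eq_div_iff hden1 hden2, hneg, hc_split, hq_split]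
  linear_combination (poch x j * poch y j * ((M.choose j : ℕ):ℝ) * (j.factorial : ℝ) *
    poch c j * poch (c + (j:ℝ)) (M-j) * poch (c-x-y) (M-j) * poch e j) * hsq


lemma cancelMid8 (m X1 X2 Y1 Y2 : ℝ) (hm : m ≠ 0) :
    (X1 * (m * X2)) / (Y1 * (m * Y2)) = X1 * X2 / (Y1 * Y2) := by
  rw [show X1 * (m * X2) = m * (X1 * X2) by ring, show Y1 * (m * Y2) = m * (Y1 * Y2) by ring,
    mul_div_mul_left _ _ hm]

lemma divHelper8 (x a b c d e f : ℝ) (hb : b ≠ 0) (hd : d ≠ 0) (hf : f ≠ 0)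
    (h : x * a * (d * f) = c * e * b) :
    x * (a / b) = c / d * (e / f) := by
  rw [div_mul_div_comm, ← mul_div_assoc, div_eq_div_iff hb (mul_ne_zero hd hf)]
  linear_combination h


lemma final8 (u k L v q d1 w P Q D E : ℝ) (hv : v = L + 2*u) (hq : q = u - (k+1))
    (hd1 : d1 ≠ 0) (hw : w ≠ 0) (hD : D ≠ 0) (hE : E ≠ 0) (hP : L + 1 + k ≠ 0) :
    u * (L * P * (q * Q) / (d1 * D * (w * E))) -
        -(k+1) * u * v / (d1 * w) * (P * Q / (D * E))
      = u * (P * (L + 1 + k) * (Q * u) / (d1 * D * (w * E)) *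
          ((L + 2 * (k+1)) / (L + 1 + k))) := by
  subst hv hq
  field_simp
  ring

set_option maxHeartbeats 12000000 in
theorem statement8 (n N : ℕ) (hN : 1 ≤ N) (hNn : N ≤ n) (lam : ℝ)
    (hlam : ∀ k : ℕ, 1 ≤ k → k ≤ N → lam - (n : ℝ) / 2 + k ≠ 0)
    (hlam' : lam - (n : ℝ) + N ≠ 0) :
    ∑ j ∈ Finset.range (N + 1),
        poch (-(N : ℝ)) j * poch ((n : ℝ) / 2) j * poch lam j /
          (poch (lam - (n : ℝ) / 2 + 1) j * poch ((n : ℝ) - N + 1) j * (j.factorial : ℝ)) =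
      poch (lam - n + 1) N * poch ((n : ℝ) / 2 - N + 1) N /
          (poch (lam - (n : ℝ) / 2 + 1) N * poch ((n : ℝ) - N + 1) N) *
        ((lam - n + 2 * N) / (lam - n + N)) := by
  obtain ⟨K, rfl⟩ : ∃ K, N = K + 1 := ⟨N - 1, by omega⟩
  have hn1 : 1 ≤ n := hN.trans hNn
  have hnN : K + 1 ≤ n := hNn
  have hnR : ((K:ℝ) + 1) ≤ (n:ℝ) := by exact_mod_cast hnN
  have hn0 : (0:ℝ) < (n:ℝ) := by exact_mod_cast hn1
  have ha0 : ((n:ℝ)/2) ≠ 0 := by positivity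
  have hd0 : lam - (n:ℝ)/2 + 1 ≠ 0 := by
    have h := hlam 1 le_rfl (by omega)
    push_cast at h
    exact h
  have hdfac : ∀ i : ℕ, i < K + 1 → (lam - (n:ℝ)/2 + 1) + i ≠ 0 := by
    intro i hi
    have h := hlam (i+1) (by omega) (by omega)
    push_cast at h
    intro h0; apply h; linarith
  have hd1fac : ∀ i : ℕ, i < K → (lam - (n:ℝ)/2 + 1 + 1) + i ≠ 0 := by
    intro i hi
    have h := hlam (i+2) (by omega) (by omega)
    push_cast at h
    intro h0; apply h; linarith
  have hqfac : ∀ i : ℕ, i < K + 1 →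
      (lam - (n:ℝ)/2 + 1) - ((n:ℝ)/2 + 1) - lam + i ≠ 0 := by
    intro i hi
    have hi' : (i:ℝ) < (n:ℝ) := by exact_mod_cast lt_of_lt_of_le hi hnN
    intro h0; linarith
  have hq2fac : ∀ i : ℕ, i < K →
      (lam - (n:ℝ)/2 + 1 + 1) - ((n:ℝ)/2 + 1) - (lam + 1) + i ≠ 0 := by
    intro i hi
    have hi' : (i:ℝ) < (n:ℝ) := by exact_mod_cast lt_of_lt_of_le (by omega : i < K + 1) hnN
    intro h0; linarith
  have he0 : ((n:ℝ) - ↑(K+1) + 1) ≠ 0 := by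
    push_cast; push_cast at hnR; intro h0; linarith
  have hpe1 : ∀ j : ℕ, poch ((n:ℝ) - ↑(K+1) + 1 + 1) j ≠ 0 := by
    intro j
    apply poch_ne_zero
    intro i _
    have : (0:ℝ) ≤ i := Nat.cast_nonneg i
    push_cast; push_cast at hnR
    intro h0; linarith
  have hpd1 : ∀ j : ℕ, j ≤ K → poch (lam - (n:ℝ)/2 + 1 + 1) j ≠ 0 := by
    intro j hj
    exact poch_ne_zero _ _ (fun i hi => hd1fac i (by omega))
  have hD' : poch (lam - (n:ℝ)/2 + 1 + 1) K ≠ 0 := hpd1 K le_rfl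
  have hE' : poch ((n:ℝ) - ↑(K+1) + 1 + 1) K ≠ 0 := hpe1 K
  have hm1 : ((-1:ℝ))^(K+1) ≠ 0 := pow_ne_zero _ (by norm_num)
  have hm2 : ((-1:ℝ))^K ≠ 0 := pow_ne_zero _ (by norm_num)
  have hlam'' : lam - (n:ℝ) + 1 + (K:ℝ) ≠ 0 := by
    push_cast at hlam'
    intro h0; apply hlam'; linarith
  -- step h3: split
  have h3 : ((n:ℝ)/2) * (∑ j ∈ Finset.range (K + 1 + 1),
        poch (-(↑(K+1) : ℝ)) j * poch ((n : ℝ) / 2) j * poch lam j /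
          (poch (lam - (n : ℝ) / 2 + 1) j * poch ((n : ℝ) - ↑(K+1) + 1) j * (j.factorial : ℝ)))
      = (∑ j ∈ Finset.range (K + 1 + 1), (((n:ℝ)/2 + j) *
          (poch (-(↑(K+1) : ℝ)) j * poch ((n : ℝ) / 2) j * poch lam j /
          (poch (lam - (n : ℝ) / 2 + 1) j * poch ((n : ℝ) - ↑(K+1) + 1) j * (j.factorial : ℝ)))))
        - (∑ j ∈ Finset.range (K + 1 + 1), ((j:ℝ) *
          (poch (-(↑(K+1) : ℝ)) j * poch ((n : ℝ) / 2) j * poch lam j /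
          (poch (lam - (n : ℝ) / 2 + 1) j * poch ((n : ℝ) - ↑(K+1) + 1) j * (j.factorial : ℝ))))) := by
    rw [← Finset.sum_sub_distrib, Finset.mul_sum]
    exact Finset.sum_congr rfl fun j _ => by ring
  -- step h1
  have h1 : (∑ j ∈ Finset.range (K + 1 + 1), (((n:ℝ)/2 + j) *
          (poch (-(↑(K+1) : ℝ)) j * poch ((n : ℝ) / 2) j * poch lam j /
          (poch (lam - (n : ℝ) / 2 + 1) j * poch ((n : ℝ) - ↑(K+1) + 1) j * (j.factorial : ℝ)))))
      = ((n:ℝ)/2) * ∑ j ∈ Finset.range (K + 1 + 1),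
          poch ((n:ℝ)/2 + 1) j * poch lam j * poch (-(↑(K+1) : ℝ)) j /
          (poch (lam - (n : ℝ) / 2 + 1) j * poch ((n : ℝ) - ↑(K+1) + 1) j * (j.factorial : ℝ)) := by
    rw [Finset.mul_sum]
    refine Finset.sum_congr rfl fun j _ => ?_
    have hpa : poch ((n:ℝ)/2) j * ((n:ℝ)/2 + j) = ((n:ℝ)/2) * poch ((n:ℝ)/2 + 1) j := by
      rw [← poch_succ, poch_succ_left]
    rw [← mul_div_assoc, ← mul_div_assoc]
    congr 1
    linear_combination (poch (-(↑(K+1) : ℝ)) j * poch lam j) * hpa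
  -- step h2
  have h2 : (∑ j ∈ Finset.range (K + 1 + 1), ((j:ℝ) *
          (poch (-(↑(K+1) : ℝ)) j * poch ((n : ℝ) / 2) j * poch lam j /
          (poch (lam - (n : ℝ) / 2 + 1) j * poch ((n : ℝ) - ↑(K+1) + 1) j * (j.factorial : ℝ)))))
      = ((-(↑(K+1) : ℝ)) * ((n:ℝ)/2) * lam / ((lam - (n:ℝ)/2 + 1) * ((n:ℝ) - ↑(K+1) + 1))) *
        ∑ j ∈ Finset.range (K + 1),
          poch ((n:ℝ)/2 + 1) j * poch (lam + 1) j * poch (-(K:ℝ)) j /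
          (poch (lam - (n : ℝ) / 2 + 1 + 1) j * poch ((n : ℝ) - ↑(K+1) + 1 + 1) j * (j.factorial : ℝ)) := by
    rw [Finset.sum_range_succ']
    simp only [Nat.cast_zero, zero_mul, add_zero]
    rw [Finset.mul_sum]
    refine Finset.sum_congr rfl fun j hj => ?_
    have hjK : j ≤ K := by have := Finset.mem_range.mp hj; omega
    have hfj : ((j.factorial : ℕ) : ℝ) ≠ 0 := by positivity
    have hfj1 : (((j+1).factorial : ℕ) : ℝ) ≠ 0 := by positivity
    have hb : poch (lam - (n:ℝ)/2 + 1) (j+1) * poch ((n:ℝ) - ↑(K+1) + 1) (j+1) *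
        (((j+1).factorial : ℕ) : ℝ) ≠ 0 := by
      refine mul_ne_zero (mul_ne_zero ?_ ?_) hfj1
      · exact poch_ne_zero _ _ (fun i hi => hdfac i (by omega))
      · apply poch_ne_zero
        intro i _
        have h0 : (0:ℝ) ≤ i := Nat.cast_nonneg i
        push_cast; push_cast at hnR
        intro hcon; linarith
    have hdd : (lam - (n:ℝ)/2 + 1) * ((n:ℝ) - ↑(K+1) + 1) ≠ 0 := mul_ne_zero hd0 he0
    have hf2 : poch (lam - (n:ℝ)/2 + 1 + 1) j * poch ((n:ℝ) - ↑(K+1) + 1 + 1) j *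
        ((j.factorial : ℕ) : ℝ) ≠ 0 :=
      mul_ne_zero (mul_ne_zero (hpd1 j hjK) (hpe1 j)) hfj
    refine divHelper8 _ _ _ _ _ _ _ hb hdd hf2 ?_
    rw [poch_succ_left (-(↑(K+1) : ℝ)) j, poch_succ_left ((n:ℝ)/2) j, poch_succ_left lam j,
      poch_succ_left (lam - (n:ℝ)/2 + 1) j, poch_succ_left ((n:ℝ) - ↑(K+1) + 1) j,
      Nat.factorial_succ]
    rw [show (-(↑(K+1) : ℝ) + 1) = -(K:ℝ) by push_cast; ring]
    push_cast
    ring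
  -- Saalschuetz applications
  have hsaal1 : (∑ j ∈ Finset.range (K + 1 + 1),
          poch ((n:ℝ)/2 + 1) j * poch lam j * poch (-(↑(K+1) : ℝ)) j /
          (poch (lam - (n : ℝ) / 2 + 1) j * poch ((n : ℝ) - ↑(K+1) + 1) j * (j.factorial : ℝ)))
      = poch ((lam - (n:ℝ)/2 + 1) - ((n:ℝ)/2 + 1)) (K+1) * poch ((lam - (n:ℝ)/2 + 1) - lam) (K+1) /
        (poch (lam - (n:ℝ)/2 + 1) (K+1) * poch ((lam - (n:ℝ)/2 + 1) - ((n:ℝ)/2 + 1) - lam) (K+1)) := by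
    exact saal (K+1) ((n:ℝ)/2 + 1) lam (lam - (n:ℝ)/2 + 1) ((n:ℝ) - ↑(K+1) + 1)
      (by push_cast; ring) hdfac hqfac
  have hsaal2 : (∑ j ∈ Finset.range (K + 1),
          poch ((n:ℝ)/2 + 1) j * poch (lam + 1) j * poch (-(K:ℝ)) j /
          (poch (lam - (n : ℝ) / 2 + 1 + 1) j * poch ((n : ℝ) - ↑(K+1) + 1 + 1) j * (j.factorial : ℝ)))
      = poch ((lam - (n:ℝ)/2 + 1 + 1) - ((n:ℝ)/2 + 1)) K * poch ((lam - (n:ℝ)/2 + 1 + 1) - (lam + 1)) K /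
        (poch (lam - (n:ℝ)/2 + 1 + 1) K * poch ((lam - (n:ℝ)/2 + 1 + 1) - ((n:ℝ)/2 + 1) - (lam + 1)) K) := by
    exact saal K ((n:ℝ)/2 + 1) (lam + 1) (lam - (n:ℝ)/2 + 1 + 1) ((n:ℝ) - ↑(K+1) + 1 + 1)
      (by push_cast; ring) hd1fac hq2fac
  -- poch conversions for V1
  have hA1 : poch ((lam - (n:ℝ)/2 + 1) - ((n:ℝ)/2 + 1)) (K+1)
      = (lam - (n:ℝ)) * poch (lam - (n:ℝ) + 1) K := by
    rw [show (lam - (n:ℝ)/2 + 1) - ((n:ℝ)/2 + 1) = lam - (n:ℝ) by ring, poch_succ_left]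
  have hA2 : poch ((lam - (n:ℝ)/2 + 1) - lam) (K+1)
      = (-1)^(K+1) * (((n:ℝ)/2 - ↑(K+1)) * poch ((n:ℝ)/2 - (K:ℝ)) K) := by
    rw [show (lam - (n:ℝ)/2 + 1) - lam = -((n:ℝ)/2 - 1) by ring, poch_neg,
      show ((n:ℝ)/2 - 1) - (↑(K+1):ℝ) + 1 = (n:ℝ)/2 - ↑(K+1) by push_cast; ring,
      poch_succ_left,
      show ((n:ℝ)/2 - (↑(K+1):ℝ)) + 1 = (n:ℝ)/2 - (K:ℝ) by push_cast; ring]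
  have hA3 : poch ((lam - (n:ℝ)/2 + 1) - ((n:ℝ)/2 + 1) - lam) (K+1)
      = (-1)^(K+1) * (((n:ℝ) - ↑(K+1) + 1) * poch ((n:ℝ) - ↑(K+1) + 1 + 1) K) := by
    rw [show (lam - (n:ℝ)/2 + 1) - ((n:ℝ)/2 + 1) - lam = -((n:ℝ)) by ring, poch_neg,
      show (n:ℝ) - (↑(K+1):ℝ) + 1 = (n:ℝ) - ↑(K+1) + 1 by ring, poch_succ_left]
  -- poch conversions for V2
  have hB1 : poch ((lam - (n:ℝ)/2 + 1 + 1) - ((n:ℝ)/2 + 1)) K = poch (lam - (n:ℝ) + 1) K := by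
    rw [show (lam - (n:ℝ)/2 + 1 + 1) - ((n:ℝ)/2 + 1) = lam - (n:ℝ) + 1 by ring]
  have hB2 : poch ((lam - (n:ℝ)/2 + 1 + 1) - (lam + 1)) K = (-1)^K * poch ((n:ℝ)/2 - (K:ℝ)) K := by
    rw [show (lam - (n:ℝ)/2 + 1 + 1) - (lam + 1) = -((n:ℝ)/2 - 1) by ring, poch_neg,
      show ((n:ℝ)/2 - 1) - (K:ℝ) + 1 = (n:ℝ)/2 - (K:ℝ) by ring]
  have hB3 : poch ((lam - (n:ℝ)/2 + 1 + 1) - ((n:ℝ)/2 + 1) - (lam + 1)) K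
      = (-1)^K * poch ((n:ℝ) - ↑(K+1) + 1 + 1) K := by
    rw [show (lam - (n:ℝ)/2 + 1 + 1) - ((n:ℝ)/2 + 1) - (lam + 1) = -((n:ℝ)) by ring, poch_neg,
      show (n:ℝ) - (K:ℝ) + 1 = (n:ℝ) - ↑(K+1) + 1 + 1 by push_cast; ring]
  -- RHS conversions
  have hR1 : poch (lam - (n:ℝ) + 1) (K+1) = poch (lam - (n:ℝ) + 1) K * (lam - (n:ℝ) + 1 + K) :=
    poch_succ _ _
  have hR2 : poch ((n:ℝ)/2 - ↑(K+1) + 1) (K+1) = poch ((n:ℝ)/2 - (K:ℝ)) K * ((n:ℝ)/2) := by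
    rw [show (n:ℝ)/2 - (↑(K+1):ℝ) + 1 = (n:ℝ)/2 - (K:ℝ) by push_cast; ring, poch_succ,
      show (n:ℝ)/2 - (K:ℝ) + (K:ℝ) = (n:ℝ)/2 by ring]
  have hR3 : poch (lam - (n:ℝ)/2 + 1) (K+1)
      = (lam - (n:ℝ)/2 + 1) * poch (lam - (n:ℝ)/2 + 1 + 1) K := poch_succ_left _ _
  have hR4 : poch ((n:ℝ) - ↑(K+1) + 1) (K+1)
      = ((n:ℝ) - ↑(K+1) + 1) * poch ((n:ℝ) - ↑(K+1) + 1 + 1) K := poch_succ_left _ _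
  -- assemble
  rw [h1, h2, hsaal1, hsaal2] at h3
  apply mul_left_cancel₀ ha0
  rw [h3, hA1, hA2, hA3, hB1, hB2, hB3, hR1, hR2, hR3, hR4]
  rw [show lam - (n:ℝ) + (↑(K+1):ℝ) = lam - (n:ℝ) + 1 + (K:ℝ) by push_cast; ring]
  rw [cancelMid8 _ _ _ _ _ hm1, cancelMid8 _ _ _ _ _ hm2]
  have hP : lam - (n:ℝ) + 1 + (K:ℝ) ≠ 0 := hlam''
  generalize poch (lam - (n:ℝ) + 1) K = P
  generalize poch ((n:ℝ)/2 - (K:ℝ)) K = Q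
  generalize hgD : poch (lam - (n:ℝ)/2 + 1 + 1) K = D at hD' ⊢
  generalize hgE : poch ((n:ℝ) - ↑(K+1) + 1 + 1) K = E at hE' ⊢
  rw [show ((K+1 : ℕ):ℝ) = (K:ℝ)+1 by push_cast; ring]
  rw [show ((K+1 : ℕ):ℝ) = (K:ℝ)+1 by push_cast; ring] at he0
  exact final8 ((n:ℝ)/2) (K:ℝ) (lam - (n:ℝ)) lam ((n:ℝ)/2 - ((K:ℝ)+1))
    (lam - (n:ℝ)/2 + 1) ((n:ℝ) - ((K:ℝ)+1) + 1) P Q D E (by ring) (by ring)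
    hd0 he0 hD' hE' hP
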